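/- For every h ≥ 1, the set of sizes of h-fold sumsets of 3-element sets of integers is {C(h+2, 2) - C(t, 2) : t ∈ [1, h]}. -/

import Mathlib

open Pointwise Finset

/-- The `h`-fold sumset of a finite set `A`. -/
def hfold {G : Type*} [AddCommMonoid G] [DecidableEq G] : ℕ → Finset G → Finset G
  | 0, _ => {0}
  | n + 1, A => hfold n A + A

/-- The `h`-fold restricted sumset of a finite set `A`: sums of `h` distinct elements. -/
def rfold {G : Type*} [AddCommMonoid G] [DecidableEq G] (h : ℕ) (A : Finset G) : Finset G :=
  (A.powersetCard h).image (fun S => S.sum id)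

/-- membership in hfold for a triple containing 0 -/
lemma mem_hfold_triple {b c x : ℤ} {h : ℕ} :
    x ∈ hfold h ({0, b, c} : Finset ℤ) ↔ ∃ j k : ℕ, j + k ≤ h ∧ x = j * b + k * c := by
  induction h generalizing x with
  | zero =>
    simp only [hfold, mem_singleton]
    constructor
    · rintro rfl; exact ⟨0, 0, by norm_num⟩
    · rintro ⟨j, k, hjk, rfl⟩
      have hj : j = 0 := by omega
      have hk : k = 0 := by omega
      subst hj; subst hk; norm_num
  | succ n ih =>
    show x ∈ hfold n _ + _ ↔ _
    rw [Finset.mem_add]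
    constructor
    · rintro ⟨y, hy, a, ha, rfl⟩
      obtain ⟨j, k, hjk, rfl⟩ := ih.mp hy
      simp only [mem_insert, mem_singleton] at ha
      rcases ha with rfl | rfl | rfl
      · exact ⟨j, k, by omega, by ring⟩
      · exact ⟨j + 1, k, by omega, by push_cast; ring⟩
      · exact ⟨j, k + 1, by omega, by push_cast; ring⟩
    · rintro ⟨j, k, hjk, rfl⟩
      rcases Nat.lt_or_ge (j + k) (n + 1) with hlt | hge
      · exact ⟨(j:ℤ) * b + k * c, ih.mpr ⟨j, k, by omega, rfl⟩, 0, by simp, by ring⟩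
      · have hjk' : j + k = n + 1 := by omega
        rcases Nat.eq_zero_or_pos j with rfl | hj
        · have hk : k = (k - 1) + 1 := by omega
          refine ⟨(0:ℤ) * b + (k-1 : ℕ) * c, ih.mpr ⟨0, k - 1, by omega, rfl⟩, c, by simp, ?_⟩
          rw [hk]; push_cast; ring
        · have hj' : j = (j - 1) + 1 := by omega
          refine ⟨((j-1 : ℕ):ℤ) * b + k * c, ih.mpr ⟨j - 1, k, by omega, rfl⟩, b, by simp, ?_⟩
          rw [hj']; push_cast; ring

def tri (h : ℕ) : Finset (ℕ × ℕ) :=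
  (Finset.range (h+1) ×ˢ Finset.range (h+1)).filter fun p => p.1 + p.2 ≤ h

lemma mem_tri {h : ℕ} {p : ℕ × ℕ} : p ∈ tri h ↔ p.1 + p.2 ≤ h := by
  simp only [tri, mem_filter, mem_product, mem_range]
  omega

lemma card_tri (h : ℕ) : (tri h).card = (h+2).choose 2 := by
  induction h with
  | zero => decide
  | succ n ih =>
    have hsplit : tri (n+1) = tri n ∪ (Finset.range (n+2)).image (fun j => (j, n+1-j)) := by
      ext p
      simp only [mem_tri, mem_union, mem_image, mem_range]
      constructor
      · intro hp
        rcases Nat.lt_or_ge (p.1 + p.2) (n+1) with h1 | h1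
        · exact Or.inl (by omega)
        · exact Or.inr ⟨p.1, by omega, by
            have : p.2 = n + 1 - p.1 := by omega
            rw [← this]⟩
      · rintro (hp | ⟨j, hj, rfl⟩)
        · omega
        · simp; omega
    have hdisj : Disjoint (tri n) ((Finset.range (n+2)).image (fun j => (j, n+1-j))) := by
      rw [Finset.disjoint_left]
      rintro p hp hp2
      rw [mem_tri] at hp
      simp only [mem_image, mem_range] at hp2
      obtain ⟨j, hj, rfl⟩ := hp2
      simp at hp; omega
    have hcardim : ((Finset.range (n+2)).image (fun j => (j, n+1-j))).card = n + 2 := by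
      rw [Finset.card_image_of_injective _ (fun a b hab => (Prod.mk.injEq _ _ _ _).mp hab |>.1)]
      simp
    rw [hsplit, Finset.card_union_of_disjoint hdisj, ih, hcardim]
    have h1 : (n+1+2) = (n+2) + 1 := by ring
    rw [h1, Nat.choose_succ_succ (n+2) 1]
    simp [Nat.choose_one_right]
    omega

lemma card_tri_filter_ge (h cn : ℕ) :
    ((tri h).filter fun p => cn ≤ p.1).card = (h + 2 - cn).choose 2 := by
  rcases Nat.lt_or_ge h cn with hc | hc
  · have : ((tri h).filter fun p => cn ≤ p.1) = ∅ := by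
      rw [Finset.eq_empty_iff_forall_notMem]
      intro p hp
      simp only [mem_filter, mem_tri] at hp
      omega
    rw [this]
    have : h + 2 - cn ≤ 1 := by omega
    interval_cases (h + 2 - cn) <;> simp
  · have himg : ((tri h).filter fun p => cn ≤ p.1)
        = (tri (h - cn)).image (fun p => (p.1 + cn, p.2)) := by
      ext p
      simp only [mem_filter, mem_tri, mem_image]
      constructor
      · intro ⟨h1, h2⟩
        exact ⟨(p.1 - cn, p.2), show p.1 - cn + p.2 ≤ h - cn by omega,
          Prod.ext (show p.1 - cn + cn = p.1 by omega) rfl⟩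
      · rintro ⟨q, hq, rfl⟩
        exact ⟨by omega, by omega⟩
    rw [himg, Finset.card_image_of_injective, card_tri]
    · congr 1; omega
    · intro a b hab
      simp only [Prod.mk.injEq] at hab
      exact Prod.ext (by omega) hab.2

lemma hfold_triple_card (h : ℕ) (b c : ℤ) (hb : 0 < b) (hbc : b < c) (hg : Int.gcd b c = 1) :
    (hfold h ({0, b, c} : Finset ℤ)).card = (h + 2).choose 2 - (h + 2 - c.toNat).choose 2 := by
  set cn := c.toNat with hcn
  have hc2 : (2:ℤ) ≤ c := by omega
  have hcnc : (cn : ℤ) = c := Int.toNat_of_nonneg (by omega)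
  have hcnpos : 0 < cn := by omega
  set bn := b.toNat with hbn
  have hbnb : (bn : ℤ) = b := Int.toNat_of_nonneg (by omega)
  have hbncn : bn ≤ cn := by omega
  set R := (tri h).filter (fun p => p.1 < cn) with hR
  set f : ℕ × ℕ → ℤ := fun p => (p.1 : ℤ) * b + (p.2 : ℤ) * c with hf
  -- the sumset is the image of R
  have himg : hfold h ({0, b, c} : Finset ℤ) = R.image f := by
    ext x
    rw [mem_hfold_triple]
    simp only [hR, hf, mem_image, mem_filter, mem_tri]
    constructor
    · rintro ⟨j, k, hjk, rfl⟩
      obtain ⟨q, r, hqr, hrlt⟩ : ∃ q r : ℕ, cn * q + r = j ∧ r < cn :=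
        ⟨j / cn, j % cn, Nat.div_add_mod j cn, Nat.mod_lt _ hcnpos⟩
      refine ⟨(r, k + q * bn), ⟨?_, hrlt⟩, ?_⟩
      · have h2 : q * bn ≤ cn * q := by
          rw [Nat.mul_comm cn q]; exact Nat.mul_le_mul_left _ hbncn
        omega
      · have h1' : c * (q : ℤ) + (r : ℤ) = (j : ℤ) := by
          rw [← hcnc]; exact_mod_cast congrArg (Nat.cast : ℕ → ℤ) hqr
        push_cast
        rw [hbnb]
        linear_combination b * h1'
    · rintro ⟨p, ⟨hp1, _⟩, rfl⟩
      exact ⟨p.1, p.2, hp1, rfl⟩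
  have hinj : Set.InjOn f R := by
    rintro p hp q hq hpq
    simp only [hR, mem_coe, mem_filter, mem_tri] at hp hq
    simp only [hf] at hpq
    -- (p.1 - q.1) * b = (q.2 - p.2) * c
    have key : ((p.1 : ℤ) - q.1) * b = ((q.2 : ℤ) - p.2) * c := by ring_nf; linarith [hpq]
    have hdvd : (c : ℤ) ∣ ((p.1 : ℤ) - q.1) * b := ⟨(q.2 : ℤ) - p.2, by linarith [key]⟩
    have hcop : IsCoprime (c : ℤ) b := by
      rw [Int.isCoprime_iff_gcd_eq_one, Int.gcd_comm]
      exact hg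
    have hdvd2 : (c : ℤ) ∣ ((p.1 : ℤ) - q.1) := hcop.dvd_of_dvd_mul_right hdvd
    have h1 : (p.1 : ℤ) - q.1 = 0 := by
      by_contra hne
      have := Int.le_of_dvd (abs_pos.mpr hne) ((dvd_abs _ _).mpr hdvd2)
      have hp1 : (p.1 : ℤ) < cn := by exact_mod_cast hp.2
      have hq1 : (q.1 : ℤ) < cn := by exact_mod_cast hq.2
      rcases abs_cases ((p.1 : ℤ) - q.1) with ⟨he, _⟩ | ⟨he, _⟩ <;> omega
    have hp1q1 : p.1 = q.1 := by exact_mod_cast sub_eq_zero.mp h1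
    have h2 : (p.2 : ℤ) = q.2 := by
      have : (p.2 : ℤ) * c = (q.2 : ℤ) * c := by
        rw [hp1q1] at hpq; linarith [hpq]
      exact mul_right_cancel₀ (by omega) this
    exact Prod.ext hp1q1 (by exact_mod_cast h2)
  rw [himg, Finset.card_image_of_injOn hinj]
  have hsplit : R.card + ((tri h).filter (fun p => ¬ p.1 < cn)).card = (tri h).card :=
    Finset.card_filter_add_card_filter_not _
  have hge : ((tri h).filter (fun p => ¬ p.1 < cn)) = ((tri h).filter (fun p => cn ≤ p.1)) := by
    congr 1
    ext p
    omega
  rw [hge, card_tri_filter_ge, card_tri] at hsplit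
  have hle : (h + 2 - cn).choose 2 ≤ (h + 2).choose 2 :=
    Nat.choose_le_choose 2 (by omega)
  omega

lemma add_singleton' (s : Finset ℤ) (a : ℤ) : s + {a} = s.image (· + a) := by
  rw [Finset.add_singleton]; rfl

lemma hfold_add_singleton (h : ℕ) (A : Finset ℤ) (t : ℤ) :
    hfold h (A + {t}) = hfold h A + {(h : ℤ) * t} := by
  induction h with
  | zero => simp [hfold]
  | succ n ih =>
    show hfold n (A + {t}) + (A + {t}) = hfold n A + A + {((n:ℤ)+1) * t}
    rw [ih]
    have : ((n:ℤ)+1) * t = (n:ℤ) * t + t := by ring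
    rw [this, ← Finset.singleton_add_singleton]
    abel

lemma hfold_image_mul (h : ℕ) (A : Finset ℤ) (d : ℤ) :
    hfold h (A.image (fun x => d * x)) = (hfold h A).image (fun x => d * x) := by
  induction h with
  | zero => simp [hfold]
  | succ n ih =>
    show hfold n _ + _ = (hfold n A + A).image _
    rw [ih]
    exact (Finset.image_add (AddMonoidHom.mulLeft d)).symm

lemma card_hfold_add_singleton (h : ℕ) (A : Finset ℤ) (t : ℤ) :
    (hfold h (A + {t})).card = (hfold h A).card := by
  rw [hfold_add_singleton]
  rw [add_singleton']
  exact Finset.card_image_of_injective _ (add_left_injective _)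

lemma exists_sorted_triple (A : Finset ℤ) (hA : A.card = 3) :
    ∃ x y z : ℤ, x < y ∧ y < z ∧ A = {x, y, z} := by
  obtain ⟨a, b, c, hab, hac, hbc, rfl⟩ := Finset.card_eq_three.mp hA
  have perm : ∀ x y z : ℤ, ({x, y, z} : Finset ℤ) = {x, z, y} ∧ ({x,y,z} : Finset ℤ) = {y,x,z} := by
    intro x y z
    constructor <;> · ext t; simp only [mem_insert, mem_singleton]; tauto
  rcases lt_trichotomy a b with h1 | h1 | h1
  · rcases lt_trichotomy b c with h2 | h2 | h2
    · exact ⟨a, b, c, h1, h2, rfl⟩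
    · exact absurd h2 hbc
    · rcases lt_trichotomy a c with h3 | h3 | h3
      · exact ⟨a, c, b, h3, h2, (perm a b c).1⟩
      · exact absurd h3 hac
      · refine ⟨c, a, b, h3, h1, ?_⟩
        ext t; simp only [mem_insert, mem_singleton]; tauto
  · exact absurd h1 hab
  · rcases lt_trichotomy a c with h2 | h2 | h2
    · exact ⟨b, a, c, h1, h2, (perm a b c).2⟩
    · exact absurd h2 hac
    · rcases lt_trichotomy b c with h3 | h3 | h3
      · refine ⟨b, c, a, h3, h2, ?_⟩
        ext t; simp only [mem_insert, mem_singleton]; tauto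
      · exact absurd h3 hbc
      · refine ⟨c, b, a, h3, h1, ?_⟩
        ext t; simp only [mem_insert, mem_singleton]; tauto

lemma reduce_triple (h : ℕ) (A : Finset ℤ) (hA : A.card = 3) :
    ∃ b c : ℤ, 0 < b ∧ b < c ∧ Int.gcd b c = 1 ∧
      (hfold h A).card = (hfold h ({0, b, c} : Finset ℤ)).card := by
  obtain ⟨x, y, z, hxy, hyz, rfl⟩ := exists_sorted_triple A hA
  have hshift : ({x, y, z} : Finset ℤ) = {0, y - x, z - x} + {x} := by
    rw [add_singleton']
    simp only [Finset.image_insert, Finset.image_singleton, zero_add, sub_add_cancel]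
  obtain ⟨b0, hb0⟩ : ∃ b0 : ℤ, b0 = y - x := ⟨y - x, rfl⟩
  obtain ⟨c0, hc0⟩ : ∃ c0 : ℤ, c0 = z - x := ⟨z - x, rfl⟩
  rw [← hb0, ← hc0] at hshift
  have hb0pos : 0 < b0 := by omega
  have hb0c0 : b0 < c0 := by omega
  obtain ⟨d, hd⟩ : ∃ d : ℤ, d = (Int.gcd b0 c0 : ℤ) := ⟨_, rfl⟩
  have hdpos : 0 < d := by
    rw [hd]
    have : Int.gcd b0 c0 ≠ 0 := fun h0 => by
      have := Int.gcd_eq_zero_iff.mp h0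
      omega
    exact_mod_cast Nat.pos_of_ne_zero this
  obtain ⟨b, hb⟩ : d ∣ b0 := hd ▸ Int.gcd_dvd_left b0 c0
  obtain ⟨c, hc⟩ : d ∣ c0 := hd ▸ Int.gcd_dvd_right b0 c0
  have hbpos : 0 < b := by
    by_contra hbn
    push_neg at hbn
    nlinarith
  have hbc : b < c := by
    rw [hb, hc] at hb0c0
    exact (mul_lt_mul_iff_right₀ hdpos).mp hb0c0
  have hgcd : Int.gcd b c = 1 := by
    have h1 : Int.gcd (d * b) (d * c) = d.natAbs * Int.gcd b c := Int.gcd_mul_left d b c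
    have h2 : Int.gcd (d * b) (d * c) = d.natAbs := by
      rw [← hb, ← hc]
      have : d.natAbs = Int.gcd b0 c0 := by
        rw [hd]; simp
      omega
    have h3 : 0 < d.natAbs := Int.natAbs_pos.mpr (by omega)
    have h4 : d.natAbs * 1 = d.natAbs * Int.gcd b c := by omega
    exact (Nat.eq_of_mul_eq_mul_left h3 h4).symm
  refine ⟨b, c, hbpos, hbc, hgcd, ?_⟩
  rw [hshift, card_hfold_add_singleton]
  have himg : ({0, b0, c0} : Finset ℤ) = ({0, b, c} : Finset ℤ).image (fun t => d * t) := by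
    rw [hb, hc]
    simp only [Finset.image_insert, Finset.image_singleton, mul_zero]
  rw [himg, hfold_image_mul]
  exact Finset.card_image_of_injective _ (mul_right_injective₀ (by omega))

theorem stmt17 (h : ℕ) (hh : 1 ≤ h) :
    {n : ℕ | ∃ A : Finset ℤ, A.card = 3 ∧ (hfold h A).card = n}
      = {n : ℕ | ∃ t : ℕ, 1 ≤ t ∧ t ≤ h ∧ n = (h + 2).choose 2 - t.choose 2} := by
  ext n
  simp only [Set.mem_setOf_eq]
  constructor
  · rintro ⟨A, hA, rfl⟩
    obtain ⟨b, c, hb, hbc, hg, hcard⟩ := reduce_triple h A hA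
    rw [hcard, hfold_triple_card h b c hb hbc hg]
    have hcn2 : 2 ≤ c.toNat := by omega
    rcases le_or_gt c.toNat (h+1) with hle | hlt
    · exact ⟨h + 2 - c.toNat, by omega, by omega, rfl⟩
    · refine ⟨1, le_refl 1, hh, ?_⟩
      have h0 : h + 2 - c.toNat = 0 := by omega
      rw [h0]
      norm_num
  · rintro ⟨t, ht1, hth, rfl⟩
    have hc2 : (2 : ℤ) ≤ ((h + 2 - t : ℕ) : ℤ) := by
      have : 2 ≤ h + 2 - t := by omega
      exact_mod_cast this
    refine ⟨{0, 1, ((h + 2 - t : ℕ) : ℤ)}, ?_, ?_⟩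
    · rw [Finset.card_insert_of_notMem, Finset.card_insert_of_notMem, Finset.card_singleton]
      · simp only [mem_singleton]
        omega
      · simp only [mem_insert, mem_singleton]
        push_neg
        constructor <;> omega
    · rw [hfold_triple_card h 1 _ one_pos (by omega) Int.one_gcd]
      have htn : ((h + 2 - t : ℕ) : ℤ).toNat = h + 2 - t := by
        omega
      rw [htn]
      have : h + 2 - (h + 2 - t) = t := by omega
      rw [this]
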